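/- (Fuchsian ODE existence and uniqueness from the singular time.) Let N ≥ 1 be an integer, ε > 0, T > 0. Let A be an N×N real matrix with sup_{σ∈(0,1)} ‖σ^A‖ < ∞, and let F : [0,T) × ℝ^N → ℝ^N be continuous and locally Lipschitz in its second argument. Let v ∈ ℝ^N satisfy Av = 0. Then there exist T_* ∈ (0,T] and a continuous function V : [0,T_*) → ℝ^N, differentiable on (0,T_*), with V(0) = v and t·V′(t) + A·V(t) = t^ε·F(t, V(t)) for all t ∈ (0,T_*); V is the unique continuous function on [0,T_*) with these properties; and there exists C ≥ 0 such that |V(t) − v| ≤ C·t^ε for all t ∈ [0,T_*). -/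

import Mathlib

open Real Filter Topology MeasureTheory intervalIntegral

set_option maxHeartbeats 1000000
set_option linter.unusedSectionVars false
set_option synthInstance.maxHeartbeats 400000

section Aux
variable {E : Type*} [NormedAddCommGroup E] [NormedSpace ℝ E] [CompleteSpace E]
variable (L : E →L[ℝ] E)

lemma ee_cont : Continuous (fun c : ℝ => NormedSpace.exp (c • L)) :=
  (continuous_iff_continuousAt.2 fun x => (NormedSpace.exp_analytic (𝕂 := ℝ) x).continuousAt).comp (continuous_id.smul continuous_const)

lemma commute_smul (a b : ℝ) : Commute (a • L) (b • L) := by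
  show (a • L) * (b • L) = (b • L) * (a • L)
  rw [smul_mul_assoc, mul_smul_comm, smul_mul_assoc, mul_smul_comm, smul_comm]

lemma ee_add (a b : ℝ) (x : E) :
    NormedSpace.exp (a • L) (NormedSpace.exp (b • L) x)
      = NormedSpace.exp ((a + b) • L) x := by
  have h : NormedSpace.exp ((a + b) • L)
      = NormedSpace.exp (a • L) * NormedSpace.exp (b • L) := by
    rw [add_smul]
    exact NormedSpace.exp_add_of_commute_of_mem_ball (𝕂 := ℝ) (commute_smul L a b)
      ((NormedSpace.expSeries_radius_eq_top ℝ (E →L[ℝ] E)).symm ▸ edist_lt_top _ _)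
      ((NormedSpace.expSeries_radius_eq_top ℝ (E →L[ℝ] E)).symm ▸ edist_lt_top _ _)
  rw [h]; rfl

lemma ee_zero : NormedSpace.exp ((0 : ℝ) • L) = 1 := by
  rw [zero_smul, NormedSpace.exp_zero]

lemma ee_ker {v : E} (hv : L v = 0) (c : ℝ) : NormedSpace.exp (c • L) v = v := by
  rw [NormedSpace.exp_eq_tsum ℝ]
  have hpow : ∀ n : ℕ, 1 ≤ n → ((c • L) ^ n) v = 0 := by
    intro n hn
    have h1 : ((c : ℝ) • L) v = 0 := by
      rw [ContinuousLinearMap.smul_apply, hv, smul_zero]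
    obtain ⟨m, rfl⟩ := Nat.exists_eq_add_of_le hn
    rw [add_comm, pow_succ, ContinuousLinearMap.mul_apply, h1, map_zero]
  have : (∑' n : ℕ, ((n.factorial : ℝ)⁻¹ • (c • L) ^ n)) v
      = ∑' n : ℕ, ((n.factorial : ℝ)⁻¹ • (c • L) ^ n) v := by
    have hs : Summable (fun n : ℕ => (n.factorial : ℝ)⁻¹ • (c • L) ^ n) :=
      NormedSpace.expSeries_summable' (𝕂 := ℝ) (c • L)
    exact ((ContinuousLinearMap.apply ℝ E v).map_tsum hs)
  rw [this, tsum_eq_single 0]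
  · simp
  · intro n hn
    simp only [ContinuousLinearMap.smul_apply, hpow n (Nat.one_le_iff_ne_zero.2 hn), smul_zero]

lemma ee_comm (c : ℝ) (x : E) :
    L (NormedSpace.exp (c • L) x) = NormedSpace.exp (c • L) (L x) := by
  have hc : Commute L (c • L) := by
    show L * (c • L) = (c • L) * L
    rw [smul_mul_assoc, mul_smul_comm]
  have h : L * NormedSpace.exp (c • L) = NormedSpace.exp (c • L) * L :=
    (hc.exp_right)
  exact DFunLike.congr_fun h x

end Aux

section Master
variable {E : Type*} [NormedAddCommGroup E] [NormedSpace ℝ E] [CompleteSpace E]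

lemma master (L : E →L[ℝ] E) {M' : ℝ}
    (hM' : ∀ c ≤ (0:ℝ), ‖NormedSpace.exp (c • L)‖ ≤ M') {ε : ℝ} (hε : 0 < ε)
    (g : ℝ → E) {c a b tt : ℝ} (ha : 0 ≤ a) (hab : a ≤ b) (hbt : b ≤ tt) (hc : 0 ≤ c)
    (hgc : ContinuousOn g (Set.Ioc a b)) (hgb : ∀ s ∈ Set.Ioc a b, ‖g s‖ ≤ c) :
    MeasureTheory.IntegrableOn
      (fun s : ℝ => s ^ (ε-1) • NormedSpace.exp ((Real.log s - Real.log tt) • L) (g s))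
      (Set.Ioc a b) ∧
    ‖∫ s in Set.Ioc a b,
        s ^ (ε-1) • NormedSpace.exp ((Real.log s - Real.log tt) • L) (g s)‖
      ≤ M' * c * ((b ^ ε - a ^ ε) / ε) := by
  have hM'0 : 0 ≤ M' := le_trans (norm_nonneg _) (hM' 0 le_rfl)
  set J : ℝ → E := fun s => s ^ (ε-1) • NormedSpace.exp ((Real.log s - Real.log tt) • L) (g s)
    with hJ
  have hpt : ∀ s ∈ Set.Ioc a b, ‖J s‖ ≤ (M' * c) * s ^ (ε-1) := by
    intro s hs
    have hs0 : 0 < s := ha.trans_lt hs.1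
    have hlog : Real.log s - Real.log tt ≤ 0 :=
      sub_nonpos.2 (Real.log_le_log hs0 (hs.2.trans hbt))
    have h1 : ‖NormedSpace.exp ((Real.log s - Real.log tt) • L) (g s)‖ ≤ M' * c := by
      refine le_trans (ContinuousLinearMap.le_opNorm _ _) ?_
      exact mul_le_mul (hM' _ hlog) (hgb s hs) (norm_nonneg _) hM'0
    rw [hJ, norm_smul, Real.norm_eq_abs, abs_of_nonneg (Real.rpow_nonneg hs0.le _)]
    rw [mul_comm (M' * c) _]
    exact mul_le_mul_of_nonneg_left h1 (Real.rpow_nonneg hs0.le _)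
  have hdom : MeasureTheory.IntegrableOn (fun s : ℝ => (M' * c) * s ^ (ε-1)) (Set.Ioc a b) := by
    have h1 : IntervalIntegrable (fun s : ℝ => s ^ (ε-1)) MeasureTheory.volume 0 b :=
      intervalIntegral.intervalIntegrable_rpow' (by linarith)
    have h2 : MeasureTheory.IntegrableOn (fun s : ℝ => s ^ (ε-1)) (Set.Ioc 0 b) :=
      (intervalIntegrable_iff_integrableOn_Ioc_of_le (ha.trans hab)).1 h1
    exact (h2.mono_set (Set.Ioc_subset_Ioc_left ha)).const_mul _
  have hsub : Set.Ioc a b ⊆ ({0}ᶜ : Set ℝ) := by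
    intro s hs
    exact (ne_of_gt (ha.trans_lt hs.1))
  have hcont : ContinuousOn J (Set.Ioc a b) := by
    apply ContinuousOn.smul
    · intro s hs
      exact (Real.continuousAt_rpow_const s _
        (Or.inl (ne_of_gt (ha.trans_lt hs.1)))).continuousWithinAt
    · apply ContinuousOn.clm_apply _ hgc
      exact (ee_cont L).comp_continuousOn
        ((Real.continuousOn_log.mono hsub).sub continuousOn_const)
  have haesm := hcont.aestronglyMeasurable (μ := MeasureTheory.volume) measurableSet_Ioc
  have haeb : ∀ᵐ s ∂(MeasureTheory.volume.restrict (Set.Ioc a b)),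
      ‖J s‖ ≤ (M' * c) * s ^ (ε-1) := by
    filter_upwards [MeasureTheory.ae_restrict_mem measurableSet_Ioc] with s hs
    exact hpt s hs
  have hint : MeasureTheory.IntegrableOn J (Set.Ioc a b) :=
    MeasureTheory.Integrable.mono' hdom haesm haeb
  refine ⟨hint, ?_⟩
  calc ‖∫ s in Set.Ioc a b, J s‖ ≤ ∫ s in Set.Ioc a b, (M' * c) * s ^ (ε-1) :=
        MeasureTheory.norm_integral_le_of_norm_le hdom haeb
    _ = (M' * c) * ∫ s in Set.Ioc a b, s ^ (ε-1) := by
        rw [MeasureTheory.integral_const_mul]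
    _ = M' * c * ((b ^ ε - a ^ ε) / ε) := by
        rw [← intervalIntegral.integral_of_le hab,
          integral_rpow (Or.inl (by linarith : (-1:ℝ) < ε - 1))]
        norm_num
end Master

section Fact
variable {E : Type*} [NormedAddCommGroup E] [NormedSpace ℝ E] [CompleteSpace E]

lemma ee_factor (L : E →L[ℝ] E) {ε : ℝ} (g : ℝ → E) (a b tt : ℝ)
    (hint : MeasureTheory.IntegrableOn
      (fun s : ℝ => s ^ (ε-1) • NormedSpace.exp (Real.log s • L) (g s)) (Set.Ioc a b)) :
    ∫ s in Set.Ioc a b, s ^ (ε-1) • NormedSpace.exp ((Real.log s - Real.log tt) • L) (g s)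
      = NormedSpace.exp ((-Real.log tt) • L)
          (∫ s in Set.Ioc a b, s ^ (ε-1) • NormedSpace.exp (Real.log s • L) (g s)) := by
  rw [← ContinuousLinearMap.integral_comp_comm _ hint]
  congr 1
  funext s
  rw [ContinuousLinearMap.map_smul, ee_add]
  congr 2
  ring

lemma ee_log_deriv (L : E →L[ℝ] E) {t : ℝ} (ht : 0 < t) :
    HasDerivAt (fun s : ℝ => NormedSpace.exp (Real.log s • L))
      (t⁻¹ • (NormedSpace.exp (Real.log t • L) * L)) t := by
  have h := HasDerivAt.scomp (h := Real.log) (x := t)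
    (hasDerivAt_exp_smul_const (𝕂 := ℝ) L (Real.log t))
    (Real.hasDerivAt_log (ne_of_gt ht))
  simpa [Function.comp_def] using h

lemma ee_neglog_deriv (L : E →L[ℝ] E) {t : ℝ} (ht : 0 < t) :
    HasDerivAt (fun s : ℝ => NormedSpace.exp ((-Real.log s) • L))
      ((-t⁻¹) • (NormedSpace.exp ((-Real.log t) • L) * L)) t := by
  have h := HasDerivAt.scomp (h := fun s : ℝ => -Real.log s) (x := t)
    (hasDerivAt_exp_smul_const (𝕂 := ℝ) L (-Real.log t))
    ((Real.hasDerivAt_log (ne_of_gt ht)).neg)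
  simpa [Function.comp_def] using h

end Fact

section IE
variable {E : Type*} [NormedAddCommGroup E] [NormedSpace ℝ E] [CompleteSpace E]

lemma sol_deriv (L : E →L[ℝ] E) {ε : ℝ} (F : ℝ → E → E) (W : ℝ → E) {s : ℝ} (hs : 0 < s)
    {W' : E} (hW' : HasDerivAt W W' s) (hode : s • W' + L (W s) = s ^ ε • F s (W s)) :
    HasDerivAt (fun σ => NormedSpace.exp (Real.log σ • L) (W σ))
      (s ^ (ε-1) • NormedSpace.exp (Real.log s • L) (F s (W s))) s := by
  have h1 := (ee_log_deriv L hs).clm_apply hW'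
  convert h1 using 1
  have hW'eq : W' + s⁻¹ • L (W s) = s ^ (ε-1) • F s (W s) := by
    have h2 := congrArg (fun z => s⁻¹ • z) hode
    simp only [smul_add, smul_smul] at h2
    rw [inv_mul_cancel₀ (ne_of_gt hs), one_smul] at h2
    have h3 : s⁻¹ * s ^ ε = s ^ (ε - 1) := by
      rw [Real.rpow_sub hs, Real.rpow_one, div_eq_inv_mul]
    rwa [h3] at h2
  rw [ContinuousLinearMap.smul_apply, ContinuousLinearMap.mul_apply,
    ← (NormedSpace.exp (Real.log s • L)).map_smul,
    ← (NormedSpace.exp (Real.log s • L)).map_smul,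
    ← (NormedSpace.exp (Real.log s • L)).map_add, add_comm (s⁻¹ • L (W s)) W', hW'eq]

lemma sol_IE (L : E →L[ℝ] E) {M' : ℝ}
    (hM' : ∀ c ≤ (0:ℝ), ‖NormedSpace.exp (c • L)‖ ≤ M') {ε : ℝ} (hε : 0 < ε)
    {T τ : ℝ} (hτ1 : τ ≤ 1) (hτT : τ < T)
    (F : ℝ → E → E)
    (hFcont : ContinuousOn (fun q : ℝ × E => F q.1 q.2) (Set.Ico 0 T ×ˢ Set.univ))
    {v : E} (hv : L v = 0) (W : ℝ → E) (hWc : ContinuousOn W (Set.Ico 0 τ)) (hW0 : W 0 = v)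
    (hWode : ∀ t ∈ Set.Ioo (0:ℝ) τ, ∃ W', HasDerivAt W W' t ∧
      t • W' + L (W t) = t ^ ε • F t (W t)) :
    ∀ t ∈ Set.Ioo (0:ℝ) τ,
      MeasureTheory.IntegrableOn
        (fun s : ℝ => s ^ (ε-1) • NormedSpace.exp (Real.log s • L) (F s (W s)))
        (Set.Ioc 0 t) ∧
      NormedSpace.exp (Real.log t • L) (W t)
        = v + ∫ s in Set.Ioc 0 t,
            s ^ (ε-1) • NormedSpace.exp (Real.log s • L) (F s (W s)) := by
  have hM'0 : 0 ≤ M' := le_trans (norm_nonneg _) (hM' 0 le_rfl)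
  intro t ht
  have htτ : t < τ := ht.2
  have ht0 : 0 < t := ht.1
  have hsub : Set.Icc (0:ℝ) t ⊆ Set.Ico 0 τ := fun s hs => ⟨hs.1, lt_of_le_of_lt hs.2 htτ⟩
  have hFWcont : ContinuousOn (fun s => F s (W s)) (Set.Icc 0 t) := by
    apply hFcont.comp (continuousOn_id.prodMk (hWc.mono hsub))
    intro s hs
    exact ⟨⟨hs.1, lt_of_le_of_lt hs.2 (htτ.trans hτT)⟩, trivial⟩
  obtain ⟨C, hC⟩ := isCompact_Icc.exists_bound_of_continuousOn hFWcont
  set c := max C 0 with hc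
  have hc0 : 0 ≤ c := le_max_right _ _
  have hCb : ∀ s ∈ Set.Ioc (0:ℝ) t, ‖F s (W s)‖ ≤ c := fun s hs =>
    (hC s ⟨hs.1.le, hs.2⟩).trans (le_max_left _ _)
  -- master estimate with tt = 1
  have hmaster := fun (a b : ℝ) (ha : 0 ≤ a) (hab : a ≤ b) (hb : b ≤ t) =>
    master L hM' hε (fun s => F s (W s)) ha hab (hb.trans (htτ.le.trans hτ1)) hc0
      (hFWcont.mono (fun s hs => ⟨ha.trans hs.1.le, hs.2.trans hb⟩))
      (fun s hs => hCb s ⟨ha.trans_lt hs.1, hs.2.trans hb⟩)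
  simp only [Real.log_one, sub_zero] at hmaster
  have hint : MeasureTheory.IntegrableOn
      (fun s : ℝ => s ^ (ε-1) • NormedSpace.exp (Real.log s • L) (F s (W s)))
      (Set.Ioc 0 t) := (hmaster 0 t le_rfl ht0.le le_rfl).1
  refine ⟨hint, ?_⟩
  -- FTC on [δ, t]
  have key : ∀ δ ∈ Set.Ioo (0:ℝ) t,
      ∫ s in Set.Ioc δ t, s ^ (ε-1) • NormedSpace.exp (Real.log s • L) (F s (W s))
        = NormedSpace.exp (Real.log t • L) (W t)
          - NormedSpace.exp (Real.log δ • L) (W δ) := by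
    intro δ hδ
    have hii : IntervalIntegrable
        (fun s : ℝ => s ^ (ε-1) • NormedSpace.exp (Real.log s • L) (F s (W s)))
        MeasureTheory.volume δ t :=
      (intervalIntegrable_iff_integrableOn_Ioc_of_le hδ.2.le).2
        (hint.mono_set (Set.Ioc_subset_Ioc_left hδ.1.le))
    have hFTC := intervalIntegral.integral_eq_sub_of_hasDerivAt (f := fun σ =>
        NormedSpace.exp (Real.log σ • L) (W σ)) ?hder hii
    · rw [intervalIntegral.integral_of_le hδ.2.le] at hFTC
      exact hFTC
    case hder =>
      intro s hs
      rw [Set.uIcc_of_le hδ.2.le] at hs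
      have hs' : s ∈ Set.Ioo (0:ℝ) τ := ⟨hδ.1.trans_le hs.1, lt_of_le_of_lt hs.2 htτ⟩
      obtain ⟨W', hW', hode⟩ := hWode s hs'
      exact sol_deriv L F W hs'.1 hW' hode
  -- limits as δ → 0⁺
  haveI hNB : (𝓝[Set.Ioo (0:ℝ) t] 0).NeBot := by
    apply mem_closure_iff_nhdsWithin_neBot.1
    rw [closure_Ioo (ne_of_lt ht0)]
    exact ⟨le_rfl, ht0.le⟩
  set l := 𝓝[Set.Ioo (0:ℝ) t] (0:ℝ) with hl
  have hsplit : ∀ δ ∈ Set.Ioo (0:ℝ) t,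
      ∫ s in Set.Ioc δ t, s ^ (ε-1) • NormedSpace.exp (Real.log s • L) (F s (W s))
        = (∫ s in Set.Ioc 0 t, s ^ (ε-1) • NormedSpace.exp (Real.log s • L) (F s (W s)))
          - ∫ s in Set.Ioc 0 δ, s ^ (ε-1) • NormedSpace.exp (Real.log s • L) (F s (W s)) := by
    intro δ hδ
    have hu : Set.Ioc (0:ℝ) δ ∪ Set.Ioc δ t = Set.Ioc 0 t :=
      Set.Ioc_union_Ioc_eq_Ioc hδ.1.le hδ.2.le
    have hdisj : Disjoint (Set.Ioc (0:ℝ) δ) (Set.Ioc δ t) := Set.Ioc_disjoint_Ioc_of_le le_rfl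
    have := MeasureTheory.setIntegral_union hdisj measurableSet_Ioc
      (hint.mono_set (Set.Ioc_subset_Ioc_right hδ.2.le))
      (hint.mono_set (Set.Ioc_subset_Ioc_left hδ.1.le))
    rw [hu] at this
    rw [this]; abel
  have hrpow0 : Filter.Tendsto (fun δ : ℝ => δ ^ ε) l (𝓝 0) := by
    have hca : ContinuousAt (fun δ : ℝ => δ ^ ε) 0 :=
      Real.continuousAt_rpow_const 0 ε (Or.inr hε.le)
    have h2 := hca.tendsto.mono_left (nhdsWithin_le_nhds (s := Set.Ioo (0:ℝ) t))
    rwa [Real.zero_rpow (ne_of_gt hε)] at h2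
  have hlim0 : Filter.Tendsto
      (fun δ => ∫ s in Set.Ioc (0:ℝ) δ,
        s ^ (ε-1) • NormedSpace.exp (Real.log s • L) (F s (W s))) l (𝓝 0) := by
    have hb1 : ∀ᶠ δ in l, ‖∫ s in Set.Ioc (0:ℝ) δ,
        s ^ (ε-1) • NormedSpace.exp (Real.log s • L) (F s (W s))‖
          ≤ M' * c * (δ ^ ε / ε) := by
      filter_upwards [self_mem_nhdsWithin] with δ hδ
      have := (hmaster 0 δ le_rfl hδ.1.le hδ.2.le).2
      rwa [Real.zero_rpow (ne_of_gt hε), sub_zero] at this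
    have hb2 : Filter.Tendsto (fun δ : ℝ => M' * c * (δ ^ ε / ε)) l (𝓝 0) := by
      have := ((hrpow0.div_const ε).const_mul (M' * c))
      simpa using this
    exact squeeze_zero_norm' hb1 hb2
  have hWt : Filter.Tendsto W l (𝓝 v) := by
    have h1 : ContinuousWithinAt W (Set.Ico 0 τ) 0 := hWc 0 ⟨le_rfl, ht0.trans htτ⟩
    have h2 := h1.tendsto
    rw [hW0] at h2
    exact h2.mono_left (nhdsWithin_mono _ (fun s hs => ⟨hs.1.le, hs.2.trans htτ⟩))
  have hlimW : Filter.Tendsto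
      (fun δ => NormedSpace.exp (Real.log δ • L) (W δ)) l (𝓝 v) := by
    have hdiff : Filter.Tendsto
        (fun δ => NormedSpace.exp (Real.log δ • L) (W δ) - v) l (𝓝 0) := by
      have hb1 : ∀ᶠ δ in l, ‖NormedSpace.exp (Real.log δ • L) (W δ) - v‖
          ≤ M' * ‖W δ - v‖ := by
        filter_upwards [self_mem_nhdsWithin] with δ hδ
        have he : NormedSpace.exp (Real.log δ • L) (W δ) - v
            = NormedSpace.exp (Real.log δ • L) (W δ - v) := by
          rw [map_sub, ee_ker L hv]
        rw [he]
        refine le_trans (ContinuousLinearMap.le_opNorm _ _) ?_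
        exact mul_le_mul_of_nonneg_right
          (hM' _ (Real.log_nonpos hδ.1.le ((hδ.2.le.trans htτ.le).trans hτ1)))
          (norm_nonneg _)
      have hb2 : Filter.Tendsto (fun δ => M' * ‖W δ - v‖) l (𝓝 0) := by
        have h3 : Filter.Tendsto (fun δ => M' * ‖W δ - v‖) l (𝓝 (M' * ‖v - v‖)) :=
          ((hWt.sub (tendsto_const_nhds (x := v))).norm.const_mul M')
        simpa using h3
      exact squeeze_zero_norm' hb1 hb2
    have := hdiff.add (tendsto_const_nhds (x := v))
    simpa using this
  have hA : Filter.Tendsto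
      (fun δ => (∫ s in Set.Ioc (0:ℝ) t,
          s ^ (ε-1) • NormedSpace.exp (Real.log s • L) (F s (W s)))
        - ∫ s in Set.Ioc (0:ℝ) δ,
            s ^ (ε-1) • NormedSpace.exp (Real.log s • L) (F s (W s))) l
      (𝓝 ((∫ s in Set.Ioc (0:ℝ) t,
          s ^ (ε-1) • NormedSpace.exp (Real.log s • L) (F s (W s))) - 0)) :=
    tendsto_const_nhds.sub hlim0
  have hB : Filter.Tendsto
      (fun δ => NormedSpace.exp (Real.log t • L) (W t)
        - NormedSpace.exp (Real.log δ • L) (W δ)) l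
      (𝓝 (NormedSpace.exp (Real.log t • L) (W t) - v)) :=
    tendsto_const_nhds.sub hlimW
  have heq : (fun δ => (∫ s in Set.Ioc (0:ℝ) t,
          s ^ (ε-1) • NormedSpace.exp (Real.log s • L) (F s (W s)))
        - ∫ s in Set.Ioc (0:ℝ) δ,
            s ^ (ε-1) • NormedSpace.exp (Real.log s • L) (F s (W s)))
      =ᶠ[l] (fun δ => NormedSpace.exp (Real.log t • L) (W t)
        - NormedSpace.exp (Real.log δ • L) (W δ)) := by
    filter_upwards [self_mem_nhdsWithin] with δ hδ
    rw [← hsplit δ hδ, key δ hδ]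
  have hfin := tendsto_nhds_unique (hA.congr' heq) hB
  rw [sub_zero] at hfin
  rw [hfin]
  abel
end IE

section Phi
variable {E : Type*} [NormedAddCommGroup E] [NormedSpace ℝ E] [CompleteSpace E]

lemma phi_fac (L : E →L[ℝ] E) {M' : ℝ}
    (hM' : ∀ c ≤ (0:ℝ), ‖NormedSpace.exp (c • L)‖ ≤ M') {ε : ℝ} (hε : 0 < ε)
    {τ : ℝ} (hτ1 : τ ≤ 1) (g : ℝ → E) {c : ℝ} (hc0 : 0 ≤ c)
    (hgc : ContinuousOn g (Set.Icc 0 τ)) (hgb : ∀ s ∈ Set.Icc (0:ℝ) τ, ‖g s‖ ≤ c) :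
    (∀ a b : ℝ, 0 ≤ a → a ≤ b → b ≤ τ →
      MeasureTheory.IntegrableOn
        (fun s : ℝ => s ^ (ε-1) • NormedSpace.exp (Real.log s • L) (g s)) (Set.Ioc a b) ∧
      ‖∫ s in Set.Ioc a b, s ^ (ε-1) • NormedSpace.exp (Real.log s • L) (g s)‖
        ≤ M' * c * ((b ^ ε - a ^ ε) / ε)) ∧
    ∀ t ∈ Set.Icc (0:ℝ) τ,
      (v : E) + ∫ s in Set.Ioc 0 t,
          s ^ (ε-1) • NormedSpace.exp ((Real.log s - Real.log t) • L) (g s)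
        = v + NormedSpace.exp ((-Real.log t) • L)
            (∫ s in Set.Ioc 0 t, s ^ (ε-1) • NormedSpace.exp (Real.log s • L) (g s)) := by
  have hmaster : ∀ a b : ℝ, 0 ≤ a → a ≤ b → b ≤ τ →
      MeasureTheory.IntegrableOn
        (fun s : ℝ => s ^ (ε-1) • NormedSpace.exp (Real.log s • L) (g s)) (Set.Ioc a b) ∧
      ‖∫ s in Set.Ioc a b, s ^ (ε-1) • NormedSpace.exp (Real.log s • L) (g s)‖
        ≤ M' * c * ((b ^ ε - a ^ ε) / ε) := by
    intro a b ha hab hb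
    have := master L hM' hε g (tt := 1) ha hab (hb.trans hτ1) hc0
      (hgc.mono (fun s hs => ⟨ha.trans hs.1.le, hs.2.trans hb⟩))
      (fun s hs => hgb s ⟨ha.trans hs.1.le, hs.2.trans hb⟩)
    simpa only [Real.log_one, sub_zero] using this
  refine ⟨hmaster, ?_⟩
  intro t ht
  congr 1
  exact ee_factor L g 0 t t (hmaster 0 t le_rfl ht.1 ht.2).1

lemma phi_cont (L : E →L[ℝ] E) {M' : ℝ}
    (hM' : ∀ c ≤ (0:ℝ), ‖NormedSpace.exp (c • L)‖ ≤ M') {ε : ℝ} (hε : 0 < ε)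
    {τ : ℝ} (hτ0 : 0 < τ) (hτ1 : τ ≤ 1) (g : ℝ → E) {c : ℝ} (hc0 : 0 ≤ c)
    (hgc : ContinuousOn g (Set.Icc 0 τ)) (hgb : ∀ s ∈ Set.Icc (0:ℝ) τ, ‖g s‖ ≤ c)
    (v : E) :
    ContinuousOn (fun t => v + ∫ s in Set.Ioc 0 t,
      s ^ (ε-1) • NormedSpace.exp ((Real.log s - Real.log t) • L) (g s))
      (Set.Icc 0 τ) := by
  obtain ⟨hmaster, hfac⟩ := phi_fac (v := v) L hM' hε hτ1 g hc0 hgc hgb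
  have hGint : MeasureTheory.IntegrableOn
      (fun s : ℝ => s ^ (ε-1) • NormedSpace.exp (Real.log s • L) (g s))
      (Set.Icc 0 τ) :=
    (integrableOn_Icc_iff_integrableOn_Ioc).2
      (hmaster 0 τ le_rfl hτ0.le le_rfl).1
  have hGc : ContinuousOn
      (fun t => ∫ s in Set.Ioc 0 t, s ^ (ε-1) • NormedSpace.exp (Real.log s • L) (g s))
      (Set.Icc 0 τ) := intervalIntegral.continuousOn_primitive hGint
  intro t₀ ht₀
  rcases eq_or_lt_of_le ht₀.1 with h0 | h0
  · -- t₀ = 0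
    have hΦ0 : (fun t => v + ∫ s in Set.Ioc 0 t,
        s ^ (ε-1) • NormedSpace.exp ((Real.log s - Real.log t) • L) (g s)) t₀ = v := by
      rw [← h0]
      simp
    unfold ContinuousWithinAt
    rw [hΦ0, ← h0]
    have hI0 : Filter.Tendsto (fun t => ∫ s in Set.Ioc (0:ℝ) t,
        s ^ (ε-1) • NormedSpace.exp ((Real.log s - Real.log t) • L) (g s))
        (𝓝[Set.Icc 0 τ] 0) (𝓝 0) := by
      have hb1 : ∀ᶠ t in 𝓝[Set.Icc (0:ℝ) τ] 0, ‖∫ s in Set.Ioc (0:ℝ) t,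
          s ^ (ε-1) • NormedSpace.exp ((Real.log s - Real.log t) • L) (g s)‖
            ≤ M' * c * (t ^ ε / ε) := by
        filter_upwards [self_mem_nhdsWithin] with t htt
        have := (master L hM' hε g (tt := t) le_rfl htt.1 le_rfl hc0
          (hgc.mono (fun s hs => ⟨hs.1.le, hs.2.trans htt.2⟩))
          (fun s hs => hgb s ⟨hs.1.le, hs.2.trans htt.2⟩)).2
        rwa [Real.zero_rpow (ne_of_gt hε), sub_zero] at this
      have hb2 : Filter.Tendsto (fun t : ℝ => M' * c * (t ^ ε / ε))
          (𝓝[Set.Icc (0:ℝ) τ] 0) (𝓝 0) := by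
        have hca : ContinuousAt (fun δ : ℝ => δ ^ ε) 0 :=
          Real.continuousAt_rpow_const 0 ε (Or.inr hε.le)
        have h2 := hca.tendsto.mono_left (nhdsWithin_le_nhds (s := Set.Icc (0:ℝ) τ))
        rw [Real.zero_rpow (ne_of_gt hε)] at h2
        have h3 := ((h2.div_const ε).const_mul (M' * c))
        simpa using h3
      exact squeeze_zero_norm' hb1 hb2
    have := (tendsto_const_nhds (x := v)).add hI0
    simpa using this
  · -- 0 < t₀
    have hRHS : ContinuousOn (fun t => v + NormedSpace.exp ((-Real.log t) • L)
        (∫ s in Set.Ioc (0:ℝ) t, s ^ (ε-1) • NormedSpace.exp (Real.log s • L) (g s)))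
        (Set.Icc 0 τ ∩ Set.Ioi 0) := by
      apply ContinuousOn.add continuousOn_const
      apply ContinuousOn.clm_apply
      · exact (ee_cont L).comp_continuousOn
          ((Real.continuousOn_log.mono (fun s hs => ne_of_gt hs.2)).neg)
      · exact hGc.mono Set.inter_subset_left
    have hW : ContinuousWithinAt (fun t => v + ∫ s in Set.Ioc (0:ℝ) t,
        s ^ (ε-1) • NormedSpace.exp ((Real.log s - Real.log t) • L) (g s))
        (Set.Icc 0 τ ∩ Set.Ioi 0) t₀ := by
      apply (hRHS t₀ ⟨ht₀, h0⟩).congr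
      · intro t htx
        exact hfac t htx.1
      · exact hfac t₀ ht₀
    exact (continuousWithinAt_inter (Ioi_mem_nhds h0)).1 hW
end Phi

section PhiD
variable {E : Type*} [NormedAddCommGroup E] [NormedSpace ℝ E] [CompleteSpace E]

lemma phi_deriv (L : E →L[ℝ] E) {M' : ℝ}
    (hM' : ∀ c ≤ (0:ℝ), ‖NormedSpace.exp (c • L)‖ ≤ M') {ε : ℝ} (hε : 0 < ε)
    {τ : ℝ} (hτ1 : τ ≤ 1) (g : ℝ → E) {c : ℝ} (hc0 : 0 ≤ c)
    (hgc : ContinuousOn g (Set.Icc 0 τ)) (hgb : ∀ s ∈ Set.Icc (0:ℝ) τ, ‖g s‖ ≤ c)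
    {v : E} (hv : L v = 0) :
    ∀ t ∈ Set.Ioo (0:ℝ) τ, ∃ D : E,
      HasDerivAt (fun t => v + ∫ s in Set.Ioc 0 t,
        s ^ (ε-1) • NormedSpace.exp ((Real.log s - Real.log t) • L) (g s)) D t ∧
      t • D + L (v + ∫ s in Set.Ioc 0 t,
        s ^ (ε-1) • NormedSpace.exp ((Real.log s - Real.log t) • L) (g s))
          = t ^ ε • g t := by
  obtain ⟨hmaster, hfac⟩ := phi_fac (v := v) L hM' hε hτ1 g hc0 hgc hgb
  intro t ht
  set G : ℝ → E := fun tt => ∫ s in Set.Ioc 0 tt,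
    s ^ (ε-1) • NormedSpace.exp (Real.log s • L) (g s) with hG
  -- FTC: derivative of G at t
  have hGi' : IntervalIntegrable
      (fun s : ℝ => s ^ (ε-1) • NormedSpace.exp (Real.log s • L) (g s))
      MeasureTheory.volume 0 t :=
    (intervalIntegrable_iff_integrableOn_Ioc_of_le ht.1.le).2
      (hmaster 0 t le_rfl ht.1.le ht.2.le).1
  have hIcont : ContinuousOn
      (fun s : ℝ => s ^ (ε-1) • NormedSpace.exp (Real.log s • L) (g s))
      (Set.Ioo 0 τ) := by
    apply ContinuousOn.smul
    · intro s hs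
      exact (Real.continuousAt_rpow_const s _ (Or.inl (ne_of_gt hs.1))).continuousWithinAt
    · apply ContinuousOn.clm_apply
      · exact (ee_cont L).comp_continuousOn
          (Real.continuousOn_log.mono (fun s hs => ne_of_gt hs.1))
      · exact hgc.mono Set.Ioo_subset_Icc_self
  have hmeasAt : StronglyMeasurableAtFilter
      (fun s : ℝ => s ^ (ε-1) • NormedSpace.exp (Real.log s • L) (g s)) (𝓝 t) :=
    hIcont.stronglyMeasurableAtFilter isOpen_Ioo t ht
  have hcontAt : ContinuousAt
      (fun s : ℝ => s ^ (ε-1) • NormedSpace.exp (Real.log s • L) (g s)) t :=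
    hIcont.continuousAt (isOpen_Ioo.mem_nhds ht)
  have hG' : HasDerivAt (fun tt => ∫ x in (0:ℝ)..tt,
      x ^ (ε-1) • NormedSpace.exp (Real.log x • L) (g x))
      (t ^ (ε-1) • NormedSpace.exp (Real.log t • L) (g t)) t :=
    intervalIntegral.integral_hasDerivAt_right hGi' hmeasAt hcontAt
  have hGd : HasDerivAt G (t ^ (ε-1) • NormedSpace.exp (Real.log t • L) (g t)) t := by
    apply hG'.congr_of_eventuallyEq
    filter_upwards [Ioi_mem_nhds ht.1] with tt htt
    rw [hG, intervalIntegral.integral_of_le (le_of_lt htt)]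
  have hQ := ee_neglog_deriv L ht.1
  have happ := (hQ.clm_apply hGd).const_add v
  -- transfer to Φ via eventual equality
  have hfac' : (fun tt => v + ∫ s in Set.Ioc 0 tt,
      s ^ (ε-1) • NormedSpace.exp ((Real.log s - Real.log tt) • L) (g s))
      =ᶠ[𝓝 t] (fun tt => v + NormedSpace.exp ((-Real.log tt) • L) (G tt)) := by
    filter_upwards [Ioo_mem_nhds ht.1 ht.2] with tt htt
    exact hfac tt ⟨htt.1.le, htt.2.le⟩
  set D : E := (-t⁻¹ • (NormedSpace.exp ((-Real.log t) • L) * L)) (G t)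
      + NormedSpace.exp ((-Real.log t) • L)
          (t ^ (ε-1) • NormedSpace.exp (Real.log t • L) (g t)) with hD
  have hΦd : HasDerivAt (fun tt => v + ∫ s in Set.Ioc 0 tt,
      s ^ (ε-1) • NormedSpace.exp ((Real.log s - Real.log tt) • L) (g s)) D t :=
    happ.congr_of_eventuallyEq hfac'
  refine ⟨D, hΦd, ?_⟩
  -- algebra
  have ht0 : (0:ℝ) < t := ht.1
  have e1 : NormedSpace.exp ((-Real.log t) • L)
      (t ^ (ε-1) • NormedSpace.exp (Real.log t • L) (g t)) = t ^ (ε-1) • g t := by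
    rw [ContinuousLinearMap.map_smul, ee_add]
    simp [ee_zero L]
  have e2 : (-t⁻¹ • (NormedSpace.exp ((-Real.log t) • L) * L)) (G t)
      = -t⁻¹ • NormedSpace.exp ((-Real.log t) • L) (L (G t)) := by
    rw [ContinuousLinearMap.smul_apply, ContinuousLinearMap.mul_apply]
  have e3 : t • D = - NormedSpace.exp ((-Real.log t) • L) (L (G t)) + t ^ ε • g t := by
    rw [hD, smul_add, e2, e1, smul_smul, smul_smul]
    rw [mul_neg, mul_inv_cancel₀ (ne_of_gt ht0), neg_one_smul]
    have e4 : t * t ^ (ε - 1) = t ^ ε := by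
      rw [Real.rpow_sub ht0, Real.rpow_one]
      field_simp
    rw [e4]
  rw [hfac t ⟨ht.1.le, ht.2.le⟩, e3, map_add, hv, zero_add, ee_comm]
  abel
end PhiD

section Main
variable {E : Type*} [NormedAddCommGroup E] [NormedSpace ℝ E] [CompleteSpace E]

theorem fuchsian_aux (ε : ℝ) (hε : 0 < ε) (T : ℝ) (hT : 0 < T) (L : E →L[ℝ] E) (M : ℝ)
    (hA : ∀ σ ∈ Set.Ioo (0:ℝ) 1, ‖NormedSpace.exp (Real.log σ • L)‖ ≤ M)
    (F : ℝ → E → E)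
    (hFcont : ContinuousOn (fun q : ℝ × E => F q.1 q.2) (Set.Ico 0 T ×ˢ Set.univ))
    (hFlip : ∀ x : E, ∃ (K : NNReal) (r : ℝ), 0 < r ∧
      ∀ t ∈ Set.Ico (0:ℝ) T, LipschitzOnWith K (F t) (Metric.ball x r))
    (v : E) (hv : L v = 0) :
    ∃ Tstar : ℝ, 0 < Tstar ∧ Tstar ≤ T ∧
      ∃ V : ℝ → E,
        ContinuousOn V (Set.Ico 0 Tstar) ∧
        V 0 = v ∧
        (∀ t ∈ Set.Ioo (0:ℝ) Tstar, ∃ V' : E,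
          HasDerivAt V V' t ∧ t • V' + L (V t) = t ^ ε • F t (V t)) ∧
        (∀ W : ℝ → E, ContinuousOn W (Set.Ico 0 Tstar) → W 0 = v →
          (∀ t ∈ Set.Ioo (0:ℝ) Tstar, ∃ W' : E,
            HasDerivAt W W' t ∧ t • W' + L (W t) = t ^ ε • F t (W t)) →
          ∀ t ∈ Set.Ico 0 Tstar, W t = V t) ∧
        ∃ C : ℝ, 0 ≤ C ∧ ∀ t ∈ Set.Ico (0:ℝ) Tstar, ‖V t - v‖ ≤ C * t ^ ε := by
  classical
  -- uniform bound on the semigroup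
  set M' : ℝ := max M 1 with hM'def
  have hM'1 : (1:ℝ) ≤ M' := le_max_right _ _
  have hM'0 : (0:ℝ) ≤ M' := le_trans zero_le_one hM'1
  have hM' : ∀ c ≤ (0:ℝ), ‖NormedSpace.exp (c • L)‖ ≤ M' := by
    intro c hc
    rcases lt_or_eq_of_le hc with hlt | heq
    · have h1 : Real.exp c ∈ Set.Ioo (0:ℝ) 1 := ⟨Real.exp_pos c, Real.exp_lt_one_iff.2 hlt⟩
      have h2 := hA (Real.exp c) h1
      rw [Real.log_exp] at h2
      exact h2.trans (le_max_left _ _)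
    · rw [heq, ee_zero]
      calc ‖(1 : E →L[ℝ] E)‖ ≤ 1 := ContinuousLinearMap.norm_id_le
        _ ≤ M' := hM'1
  -- Lipschitz data around v
  obtain ⟨K, r, hr, hKlip⟩ := hFlip v
  -- bound for F near (0, v)
  set B : ℝ := ‖F 0 v‖ + 1 with hBdef
  have hB0 : 0 < B := by positivity
  obtain ⟨ρ, hρ0, hρ⟩ : ∃ ρ > (0:ℝ), ∀ q : ℝ × E, q ∈ Set.Ico 0 T ×ˢ Set.univ →
      dist q (0, v) < ρ → ‖F q.1 q.2‖ ≤ B := by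
    have hcv : ContinuousWithinAt (fun q : ℝ × E => F q.1 q.2)
        (Set.Ico 0 T ×ˢ Set.univ) (0, v) := hFcont (0, v) ⟨⟨le_rfl, hT⟩, trivial⟩
    have h1 : {q : ℝ × E | dist (F q.1 q.2) (F 0 v) < 1}
        ∈ 𝓝[Set.Ico 0 T ×ˢ Set.univ] ((0:ℝ), v) :=
      hcv (Metric.ball_mem_nhds _ one_pos)
    rw [Metric.mem_nhdsWithin_iff] at h1
    obtain ⟨ρ, hρ0, hsub⟩ := h1
    refine ⟨ρ, hρ0, fun q hq hd => ?_⟩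
    have h2 : q ∈ Metric.ball ((0:ℝ), v) ρ ∩ Set.Ico 0 T ×ˢ Set.univ := ⟨hd, hq⟩
    have h3 := hsub h2
    have h4 : ‖F q.1 q.2‖ ≤ ‖F 0 v‖ + dist (F q.1 q.2) (F 0 v) := by
      rw [dist_eq_norm]
      have h5 := norm_sub_norm_le (F q.1 q.2) (F 0 v)
      linarith
    have h6 : dist (F q.1 q.2) (F 0 v) < 1 := h3
    rw [hBdef]
    linarith
  -- radius
  set r' : ℝ := min (r/2) (ρ/2) with hr'def
  have hr'0 : 0 < r' := lt_min (by linarith) (by linarith)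
  have hr'r : r' < r := lt_of_le_of_lt (min_le_left _ _) (by linarith)
  have hr'ρ : r' < ρ := lt_of_le_of_lt (min_le_right _ _) (by linarith)
  -- choose the final time τ
  obtain ⟨τ, hτ0, hτT, hτ1, hτρ, hτB, hτK⟩ : ∃ τ : ℝ, 0 < τ ∧ τ < T ∧ τ ≤ 1 ∧ τ < ρ ∧
      M' * B * (τ ^ ε / ε) ≤ r' ∧ M' * (K:ℝ) * (τ ^ ε / ε) ≤ 1/2 := by
    have hrpow : Filter.Tendsto (fun τ : ℝ => τ ^ ε) (𝓝[>] 0) (𝓝 0) := by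
      have hca : ContinuousAt (fun δ : ℝ => δ ^ ε) 0 :=
        Real.continuousAt_rpow_const 0 ε (Or.inr hε.le)
      have h2 := hca.tendsto.mono_left (nhdsWithin_le_nhds (s := Set.Ioi (0:ℝ)))
      rwa [Real.zero_rpow (ne_of_gt hε)] at h2
    have l1 : Filter.Tendsto (fun τ : ℝ => M' * B * (τ ^ ε / ε)) (𝓝[>] 0) (𝓝 0) := by
      have := (hrpow.div_const ε).const_mul (M' * B)
      simpa using this
    have l2 : Filter.Tendsto (fun τ : ℝ => M' * (K:ℝ) * (τ ^ ε / ε)) (𝓝[>] 0) (𝓝 0) := by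
      have := (hrpow.div_const ε).const_mul (M' * (K:ℝ))
      simpa using this
    have e1 : ∀ᶠ τ in 𝓝[>] (0:ℝ), M' * B * (τ ^ ε / ε) < r' := l1.eventually_lt_const hr'0
    have e2 : ∀ᶠ τ in 𝓝[>] (0:ℝ), M' * (K:ℝ) * (τ ^ ε / ε) < 1/2 :=
      l2.eventually_lt_const one_half_pos
    have e3 : ∀ᶠ τ in 𝓝[>] (0:ℝ), τ < T := (eventually_lt_nhds hT).filter_mono nhdsWithin_le_nhds
    have e4 : ∀ᶠ τ in 𝓝[>] (0:ℝ), τ < 1 :=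
      (eventually_lt_nhds one_pos).filter_mono nhdsWithin_le_nhds
    have e5 : ∀ᶠ τ in 𝓝[>] (0:ℝ), τ < ρ :=
      (eventually_lt_nhds hρ0).filter_mono nhdsWithin_le_nhds
    have e6 : ∀ᶠ τ in 𝓝[>] (0:ℝ), τ ∈ Set.Ioi (0:ℝ) := eventually_mem_nhdsWithin
    obtain ⟨τ, h1, h2, h3, h4, h5, h6⟩ := (e1.and (e2.and (e3.and (e4.and (e5.and e6))))).exists
    exact ⟨τ, h6, h3, h4.le, h5, h1.le, h2.le⟩
  -- the function space
  haveI : CompactSpace ↥(Set.Icc (0:ℝ) τ) := isCompact_iff_compactSpace.mp isCompact_Icc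
  set uext : C(↥(Set.Icc (0:ℝ) τ), E) → ℝ → E :=
    fun f => Set.IccExtend (le_of_lt hτ0) ⇑f with huext
  have huc : ∀ f : C(↥(Set.Icc (0:ℝ) τ), E), Continuous (uext f) :=
    fun f => f.continuous.Icc_extend'
  have humem : ∀ (f : C(↥(Set.Icc (0:ℝ) τ), E)) (s : ℝ), ∃ x, uext f s = f x := by
    intro f s
    exact ⟨_, rfl⟩
  have hueq : ∀ (f : C(↥(Set.Icc (0:ℝ) τ), E)) (s : ℝ) (hs : s ∈ Set.Icc (0:ℝ) τ),
      uext f s = f ⟨s, hs⟩ := by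
    intro f s hs
    rw [huext]
    exact Set.IccExtend_of_mem _ _ hs
  have hgc_all : ∀ f : C(↥(Set.Icc (0:ℝ) τ), E),
      ContinuousOn (fun s => F s (uext f s)) (Set.Icc 0 τ) := by
    intro f
    apply hFcont.comp (continuousOn_id.prodMk (huc f).continuousOn)
    intro s hs
    exact ⟨⟨hs.1, lt_of_le_of_lt hs.2 hτT⟩, trivial⟩
  have hgb_all : ∀ f : C(↥(Set.Icc (0:ℝ) τ), E), (∀ x, ‖f x - v‖ ≤ r') →
      ∀ s ∈ Set.Icc (0:ℝ) τ, ‖F s (uext f s)‖ ≤ B := by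
    intro f hf s hs
    obtain ⟨x, hx⟩ := humem f s
    apply hρ (s, uext f s) ⟨⟨hs.1, lt_of_le_of_lt hs.2 hτT⟩, trivial⟩
    rw [Prod.dist_eq]
    apply max_lt
    · rw [Real.dist_eq, sub_zero, abs_of_nonneg hs.1]
      exact lt_of_le_of_lt hs.2 hτρ
    · rw [dist_eq_norm, hx]
      exact lt_of_le_of_lt (hf x) hr'ρ
  -- the Picard map
  set Phi : (ℝ → E) → ℝ → E := fun u t => v + ∫ s in Set.Ioc 0 t,
    s ^ (ε-1) • NormedSpace.exp ((Real.log s - Real.log t) • L) (F s (u s)) with hPhi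
  set S : Set C(↥(Set.Icc (0:ℝ) τ), E) := {f | ∀ x, ‖f x - v‖ ≤ r'} with hS
  have hScl : IsClosed S := by
    have hSi : S = ⋂ x, {f : C(↥(Set.Icc (0:ℝ) τ), E) | ‖f x - v‖ ≤ r'} := by
      ext f
      simp [hS, Set.mem_iInter]
    rw [hSi]
    apply isClosed_iInter
    intro x
    have hc : Continuous fun f : C(↥(Set.Icc (0:ℝ) τ), E) => ‖f x - v‖ :=
      ((continuous_eval_const x).sub continuous_const).norm
    exact isClosed_le hc continuous_const
  haveI : Nonempty ↥S := ⟨⟨ContinuousMap.const _ v, fun x => by simp [hr'0.le]⟩⟩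
  haveI : CompleteSpace ↥S := hScl.completeSpace_coe
  have hΦcont : ∀ f : C(↥(Set.Icc (0:ℝ) τ), E), (∀ x, ‖f x - v‖ ≤ r') →
      ContinuousOn (Phi (uext f)) (Set.Icc 0 τ) := fun f hf =>
    phi_cont L hM' hε hτ0 hτ1 _ hB0.le (hgc_all f) (hgb_all f hf) v
  have hΦball : ∀ f : C(↥(Set.Icc (0:ℝ) τ), E), (∀ x, ‖f x - v‖ ≤ r') →
      ∀ t ∈ Set.Icc (0:ℝ) τ, ‖Phi (uext f) t - v‖ ≤ r' := by
    intro f hf t ht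
    have hm := (master L hM' hε (fun s => F s (uext f s)) (tt := t) le_rfl ht.1 le_rfl hB0.le
      ((hgc_all f).mono (fun s hs => ⟨hs.1.le, hs.2.trans ht.2⟩))
      (fun s hs => hgb_all f hf s ⟨hs.1.le, hs.2.trans ht.2⟩)).2
    have heq : Phi (uext f) t - v = ∫ s in Set.Ioc 0 t,
        s ^ (ε-1) • NormedSpace.exp ((Real.log s - Real.log t) • L) (F s (uext f s)) := by
      simp only [hPhi]
      exact add_sub_cancel_left v _
    rw [heq]
    refine hm.trans ?_
    rw [Real.zero_rpow (ne_of_gt hε), sub_zero]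
    calc M' * B * (t ^ ε / ε) ≤ M' * B * (τ ^ ε / ε) := by
          gcongr
          exacts [ht.1, ht.2]
      _ ≤ r' := hτB
  -- the self-map of S
  set ΦS : ↥S → ↥S := fun f =>
    ⟨⟨fun x => Phi (uext f.1) x.1, (hΦcont f.1 f.2).restrict⟩,
      fun x => hΦball f.1 f.2 x.1 x.2⟩ with hΦS
  -- contraction estimate
  have hdist : ∀ f h : ↥S, dist (ΦS f) (ΦS h) ≤ (1/2 : ℝ) * dist f h := by
    intro f h
    rw [Subtype.dist_eq, ContinuousMap.dist_le (by positivity)]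
    intro x
    obtain ⟨t, ht⟩ := x
    show dist (Phi (uext f.1) t) (Phi (uext h.1) t) ≤ 1/2 * dist f h
    rw [dist_eq_norm]
    have hif := (master L hM' hε (fun s => F s (uext f.1 s)) (tt := t) le_rfl ht.1 le_rfl hB0.le
      ((hgc_all f.1).mono (fun s hs => ⟨hs.1.le, hs.2.trans ht.2⟩))
      (fun s hs => hgb_all f.1 f.2 s ⟨hs.1.le, hs.2.trans ht.2⟩)).1
    have hih := (master L hM' hε (fun s => F s (uext h.1 s)) (tt := t) le_rfl ht.1 le_rfl hB0.le
      ((hgc_all h.1).mono (fun s hs => ⟨hs.1.le, hs.2.trans ht.2⟩))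
      (fun s hs => hgb_all h.1 h.2 s ⟨hs.1.le, hs.2.trans ht.2⟩)).1
    have heq : Phi (uext f.1) t - Phi (uext h.1) t = ∫ s in Set.Ioc 0 t,
        s ^ (ε-1) • NormedSpace.exp ((Real.log s - Real.log t) • L)
          (F s (uext f.1 s) - F s (uext h.1 s)) := by
      simp only [hPhi, add_sub_add_left_eq_sub]
      rw [← MeasureTheory.integral_sub hif hih]
      congr 1
      funext s
      rw [← smul_sub, ← map_sub]
    rw [heq]
    have hKd0 : (0:ℝ) ≤ (K:ℝ) * dist f h := by positivity
    have hlipb : ∀ s ∈ Set.Ioc (0:ℝ) t, ‖F s (uext f.1 s) - F s (uext h.1 s)‖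
        ≤ (K:ℝ) * dist f h := by
      intro s hs
      have hsI : s ∈ Set.Icc (0:ℝ) τ := ⟨hs.1.le, hs.2.trans ht.2⟩
      have h1 := hKlip s ⟨hs.1.le, lt_of_le_of_lt (hs.2.trans ht.2) hτT⟩
      have hmf : uext f.1 s ∈ Metric.ball v r := by
        rw [Metric.mem_ball, dist_eq_norm, hueq f.1 s hsI]
        exact lt_of_le_of_lt (f.2 _) hr'r
      have hmh : uext h.1 s ∈ Metric.ball v r := by
        rw [Metric.mem_ball, dist_eq_norm, hueq h.1 s hsI]
        exact lt_of_le_of_lt (h.2 _) hr'r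
      have h2 := h1.dist_le_mul _ hmf _ hmh
      rw [dist_eq_norm] at h2
      refine h2.trans ?_
      apply mul_le_mul_of_nonneg_left _ (K.coe_nonneg)
      rw [hueq f.1 s hsI, hueq h.1 s hsI, Subtype.dist_eq f h]
      exact ContinuousMap.dist_apply_le_dist _
    have hsub' : Set.Ioc (0:ℝ) t ⊆ Set.Icc 0 τ := fun s hs => ⟨hs.1.le, hs.2.trans ht.2⟩
    have hcsub : ContinuousOn (fun s => F s (uext f.1 s) - F s (uext h.1 s))
        (Set.Ioc 0 t) := ((hgc_all f.1).mono hsub').sub ((hgc_all h.1).mono hsub')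
    have hm := (master L hM' hε _ (tt := t) le_rfl ht.1 le_rfl hKd0 hcsub hlipb).2
    refine hm.trans ?_
    rw [Real.zero_rpow (ne_of_gt hε), sub_zero]
    have h3 : M' * ((K:ℝ) * dist f h) * (t ^ ε / ε)
        = (M' * (K:ℝ) * (t ^ ε / ε)) * dist f h := by ring
    rw [h3]
    apply mul_le_mul_of_nonneg_right _ dist_nonneg
    refine le_trans ?_ hτK
    gcongr
    exacts [ht.1, ht.2]
  -- fixed point
  have hcontr : ContractingWith (1/2 : NNReal) ΦS := by
    constructor
    · rw [← NNReal.coe_lt_coe]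
      norm_num
    · apply LipschitzWith.of_dist_le_mul
      intro f h
      have := hdist f h
      push_cast
      linarith
  set fstar : ↥S := ContractingWith.fixedPoint ΦS hcontr with hfs
  have hfix : ΦS fstar = fstar := hcontr.fixedPoint_isFixedPt
  set Vf : C(↥(Set.Icc (0:ℝ) τ), E) := fstar.1 with hVf
  set V : ℝ → E := Phi (uext Vf) with hV
  have hVeq : ∀ x : ↥(Set.Icc (0:ℝ) τ), V x.1 = Vf x := by
    intro x
    have h1 := congrArg (fun z : ↥S => (z.1 : C(↥(Set.Icc (0:ℝ) τ), E)) x) hfix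
    exact h1
  have hVext : ∀ s : ℝ, ∀ hs : s ∈ Set.Icc (0:ℝ) τ, uext Vf s = V s := by
    intro s hs
    rw [hueq Vf s hs, hVeq ⟨s, hs⟩]
  have hVin : ∀ x, ‖Vf x - v‖ ≤ r' := fstar.2
  have hVc : ContinuousOn V (Set.Icc 0 τ) := hΦcont Vf hVin
  have hV0 : V 0 = v := by
    rw [hV]
    simp [hPhi]
  have hVode : ∀ t ∈ Set.Ioo (0:ℝ) τ, ∃ D, HasDerivAt V D t ∧
      t • D + L (V t) = t ^ ε • F t (V t) := by
    intro t ht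
    obtain ⟨D, hD1, hD2⟩ := phi_deriv L hM' hε hτ1 (fun s => F s (uext Vf s)) hB0.le
      (hgc_all Vf) (hgb_all Vf hVin) hv t ht
    refine ⟨D, hD1, ?_⟩
    rw [hVext t ⟨ht.1.le, ht.2.le⟩] at hD2
    exact hD2
  have hVbound : ∀ t ∈ Set.Ico (0:ℝ) τ, ‖V t - v‖ ≤ (M' * B / ε) * t ^ ε := by
    intro t ht
    have hm := (master L hM' hε (fun s => F s (uext Vf s)) (tt := t) le_rfl ht.1 le_rfl hB0.le
      ((hgc_all Vf).mono (fun s hs => ⟨hs.1.le, hs.2.trans ht.2.le⟩))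
      (fun s hs => hgb_all Vf hVin s ⟨hs.1.le, hs.2.trans ht.2.le⟩)).2
    have heq : V t - v = ∫ s in Set.Ioc 0 t,
        s ^ (ε-1) • NormedSpace.exp ((Real.log s - Real.log t) • L) (F s (uext Vf s)) := by
      rw [hV]
      simp only [hPhi]
      exact add_sub_cancel_left v _
    rw [heq]
    refine hm.trans ?_
    rw [Real.zero_rpow (ne_of_gt hε), sub_zero]
    rw [div_mul_eq_mul_div, mul_div_assoc]
  refine ⟨τ, hτ0, hτT.le, V, hVc.mono Set.Ico_subset_Icc_self, hV0, hVode, ?_,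
    ⟨M' * B / ε, by positivity, hVbound⟩⟩
  -- uniqueness
  intro W hWc hW0 hWode t ht
  rcases eq_or_lt_of_le ht.1 with h0 | h0
  · rw [← h0, hW0, hV0]
  have hIEW := sol_IE L hM' hε hτ1 hτT F hFcont hv W hWc hW0 hWode
  have hIEV := sol_IE L hM' hε hτ1 hτT F hFcont hv V
    (hVc.mono Set.Ico_subset_Icc_self) hV0 hVode
  set SS : Set ℝ := {s | s ∈ Set.Icc 0 t ∧ ∀ u_ ∈ Set.Icc (0:ℝ) s, W u_ = V u_} with hSS
  have h0S : (0:ℝ) ∈ SS := by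
    refine ⟨⟨le_rfl, h0.le⟩, fun u hu => ?_⟩
    have hu0 : u = 0 := le_antisymm hu.2 hu.1
    rw [hu0, hW0, hV0]
  have hbdd : BddAbove SS := ⟨t, fun s hs => hs.1.2⟩
  set b := sSup SS with hb
  have hb0 : 0 ≤ b := le_csSup hbdd h0S
  have hbt : b ≤ t := csSup_le ⟨0, h0S⟩ (fun s hs => hs.1.2)
  have hbτ : b < τ := lt_of_le_of_lt hbt ht.2
  have hWVlt : ∀ s, 0 ≤ s → s < b → W s = V s := by
    intro s hs0 hsb
    obtain ⟨m, hmS, hsm⟩ := exists_lt_of_lt_csSup ⟨0, h0S⟩ hsb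
    exact hmS.2 s ⟨hs0, hsm.le⟩
  have hWVb : W b = V b := by
    rcases eq_or_lt_of_le hb0 with h0b | h0b
    · rw [← h0b, hW0, hV0]
    · haveI : (𝓝[Set.Ico 0 b] b).NeBot := by
        apply mem_closure_iff_nhdsWithin_neBot.1
        rw [closure_Ico (ne_of_lt h0b)]
        exact ⟨hb0, le_rfl⟩
      have hsubb : Set.Ico (0:ℝ) b ⊆ Set.Ico 0 τ :=
        fun s hs => ⟨hs.1, lt_of_lt_of_le hs.2 hbτ.le⟩
      have hWt : Filter.Tendsto W (𝓝[Set.Ico 0 b] b) (𝓝 (W b)) :=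
        ((hWc b ⟨hb0, hbτ⟩).mono hsubb).tendsto
      have hVt : Filter.Tendsto V (𝓝[Set.Ico 0 b] b) (𝓝 (V b)) :=
        (((hVc.mono Set.Ico_subset_Icc_self) b ⟨hb0, hbτ⟩).mono hsubb).tendsto
      have heqf : W =ᶠ[𝓝[Set.Ico 0 b] b] V := by
        filter_upwards [self_mem_nhdsWithin] with s hs
        exact hWVlt s hs.1 hs.2
      exact tendsto_nhds_unique (hVt.congr' heqf.symm) hWt |>.symm
  have hbS : b ∈ SS := by
    refine ⟨⟨hb0, hbt⟩, fun u hu => ?_⟩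
    rcases lt_or_eq_of_le hu.2 with h | h
    · exact hWVlt u hu.1 h
    · rw [h, hWVb]
  rcases eq_or_lt_of_le hbt with hbeq | hblt
  · exact hbS.2 t ⟨h0.le, hbeq.ge⟩
  exfalso
  set x : E := V b with hx
  obtain ⟨Kx, rx, hrx, hKx⟩ := hFlip x
  obtain ⟨δ₁, hδ₁0, hδ₁⟩ := Metric.continuousWithinAt_iff.1 (hWc b ⟨hb0, hbτ⟩) rx hrx
  obtain ⟨δ₂, hδ₂0, hδ₂⟩ :=
    Metric.continuousWithinAt_iff.1 ((hVc.mono Set.Ico_subset_Icc_self) b ⟨hb0, hbτ⟩) rx hrx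
  have hψ : ContinuousAt (fun δ : ℝ => M' * (Kx:ℝ) * (((b+δ) ^ ε - b ^ ε)/ε)) 0 := by
    have h1 : ContinuousAt (fun y : ℝ => y ^ ε) b :=
      Real.continuousAt_rpow_const b ε (Or.inr hε.le)
    have h2 : ContinuousAt (fun δ : ℝ => (b + δ) ^ ε) 0 := by
      apply ContinuousAt.comp (g := fun y : ℝ => y ^ ε)
      · simpa using h1
      · exact (continuous_const.add continuous_id).continuousAt
    exact ((h2.sub continuousAt_const).div_const ε).const_mul (M' * (Kx:ℝ))
  obtain ⟨δ₃, hδ₃0, hδ₃⟩ := Metric.continuousAt_iff.1 hψ 1 one_pos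
  set δ : ℝ := min (min (δ₁/2) (δ₂/2)) (min ((t - b)/2) (δ₃/2)) with hδdef
  have htb : 0 < t - b := sub_pos.2 hblt
  have hδ0 : 0 < δ := lt_min (lt_min (by linarith) (by linarith)) (lt_min (by linarith) (by linarith))
  have hδδ₁ : δ < δ₁ := lt_of_le_of_lt ((min_le_left _ _).trans (min_le_left _ _)) (by linarith)
  have hδδ₂ : δ < δ₂ := lt_of_le_of_lt ((min_le_left _ _).trans (min_le_right _ _)) (by linarith)
  have hδt : b + δ ≤ t := by
    have : δ ≤ (t - b)/2 := (min_le_right _ _).trans (min_le_left _ _)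
    linarith
  have hδδ₃ : δ < δ₃ := lt_of_le_of_lt ((min_le_right _ _).trans (min_le_right _ _)) (by linarith)
  set q : ℝ := M' * (Kx:ℝ) * (((b+δ) ^ ε - b ^ ε)/ε) with hq
  have hrpmono : b ^ ε ≤ (b + δ) ^ ε := Real.rpow_le_rpow hb0 (by linarith) hε.le
  have hq0 : 0 ≤ q := by
    rw [hq]
    apply mul_nonneg (by positivity)
    apply div_nonneg (by linarith) hε.le
  have hq1 : q < 1 := by
    have h5 : dist δ 0 < δ₃ := by
      rw [Real.dist_eq, sub_zero, abs_of_pos hδ0]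
      exact hδδ₃
    have h6 := hδ₃ h5
    rw [Real.dist_eq] at h6
    simp only [add_zero, sub_self, zero_div, mul_zero, sub_zero] at h6
    calc q ≤ |q| := le_abs_self q
      _ < 1 := h6
  have hbδτ : b + δ < τ := lt_of_le_of_lt hδt ht.2
  have hAsub : Set.Icc b (b+δ) ⊆ Set.Ico 0 τ :=
    fun s hs => ⟨hb0.trans hs.1, lt_of_le_of_lt hs.2 hbδτ⟩
  have hball : ∀ s ∈ Set.Icc b (b+δ), W s ∈ Metric.ball x rx ∧ V s ∈ Metric.ball x rx := by
    intro s hs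
    have hsI : s ∈ Set.Ico 0 τ := hAsub hs
    have hds : dist s b < δ₁ := by
      rw [Real.dist_eq, abs_of_nonneg (by linarith [hs.1] : (0:ℝ) ≤ s - b)]
      have : s - b ≤ δ := by linarith [hs.2]
      linarith
    have hds2 : dist s b < δ₂ := by
      rw [Real.dist_eq, abs_of_nonneg (by linarith [hs.1] : (0:ℝ) ≤ s - b)]
      have : s - b ≤ δ := by linarith [hs.2]
      linarith
    constructor
    · have h7 := hδ₁ hsI hds
      rw [hWVb] at h7
      exact h7
    · exact hδ₂ hsI hds2
  -- max of difference on the small interval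
  have hφc : ContinuousOn (fun s => ‖W s - V s‖) (Set.Icc b (b+δ)) :=
    ((hWc.mono hAsub).sub ((hVc.mono Set.Ico_subset_Icc_self).mono hAsub)).norm
  obtain ⟨sm, hsmA, hsmax⟩ := isCompact_Icc.exists_isMaxOn
    ⟨b, Set.left_mem_Icc.2 (by linarith)⟩ hφc
  have hφ0 : 0 ≤ ‖W sm - V sm‖ := norm_nonneg _
  have hest : ∀ tt ∈ Set.Icc b (b+δ), ‖W tt - V tt‖ ≤ q * ‖W sm - V sm‖ := by
    intro tt htt
    rcases eq_or_lt_of_le htt.1 with httb | httb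
    · rw [← httb, hWVb, sub_self, norm_zero]
      positivity
    have htt0 : 0 < tt := lt_of_le_of_lt hb0 httb
    have httτ : tt < τ := lt_of_le_of_lt htt.2 hbδτ
    obtain ⟨hiW, heW⟩ := hIEW tt ⟨htt0, httτ⟩
    obtain ⟨hiV, heV⟩ := hIEV tt ⟨htt0, httτ⟩
    -- split the integrals at b
    have hu : Set.Ioc (0:ℝ) b ∪ Set.Ioc b tt = Set.Ioc 0 tt :=
      Set.Ioc_union_Ioc_eq_Ioc hb0 htt.1
    have hdisj : Disjoint (Set.Ioc (0:ℝ) b) (Set.Ioc b tt) := Set.Ioc_disjoint_Ioc_of_le le_rfl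
    have hsplitW := MeasureTheory.setIntegral_union hdisj measurableSet_Ioc
      (hiW.mono_set (Set.Ioc_subset_Ioc_right htt.1))
      (hiW.mono_set (Set.Ioc_subset_Ioc_left hb0))
    have hsplitV := MeasureTheory.setIntegral_union hdisj measurableSet_Ioc
      (hiV.mono_set (Set.Ioc_subset_Ioc_right htt.1))
      (hiV.mono_set (Set.Ioc_subset_Ioc_left hb0))
    rw [hu] at hsplitW hsplitV
    have hcongr0 : ∫ s in Set.Ioc (0:ℝ) b,
        s ^ (ε-1) • NormedSpace.exp (Real.log s • L) (F s (W s))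
        = ∫ s in Set.Ioc (0:ℝ) b,
        s ^ (ε-1) • NormedSpace.exp (Real.log s • L) (F s (V s)) := by
      apply MeasureTheory.setIntegral_congr_fun measurableSet_Ioc
      intro s hs
      simp only
      rw [hbS.2 s ⟨hs.1.le, hs.2⟩]
    -- identity for the difference over Ioc b tt
    have hiWb := hiW.mono_set (Set.Ioc_subset_Ioc_left hb0)
    have hiVb := hiV.mono_set (Set.Ioc_subset_Ioc_left hb0)
    have hkey : NormedSpace.exp (Real.log tt • L) (W tt)
        - NormedSpace.exp (Real.log tt • L) (V tt)
        = ∫ s in Set.Ioc b tt,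
            s ^ (ε-1) • NormedSpace.exp (Real.log s • L) (F s (W s) - F s (V s)) := by
      rw [heW, heV, hsplitW, hsplitV, hcongr0, add_sub_add_left_eq_sub,
        add_sub_add_left_eq_sub, ← MeasureTheory.integral_sub hiWb hiVb]
      congr 1
      funext s
      rw [← smul_sub, ← map_sub]
    -- unfactor
    have hiD : MeasureTheory.IntegrableOn
        (fun s : ℝ => s ^ (ε-1) • NormedSpace.exp (Real.log s • L) (F s (W s) - F s (V s)))
        (Set.Ioc b tt) := by
      have h8 := hiWb.sub hiVb
      have h9 : (fun s : ℝ => s ^ (ε-1) • NormedSpace.exp (Real.log s • L) (F s (W s))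
          - s ^ (ε-1) • NormedSpace.exp (Real.log s • L) (F s (V s)))
          = fun s : ℝ => s ^ (ε-1) • NormedSpace.exp (Real.log s • L) (F s (W s) - F s (V s)) := by
        funext s
        rw [← smul_sub, ← map_sub]
      rw [← h9]
      exact h8
    have hWV : W tt - V tt = ∫ s in Set.Ioc b tt,
        s ^ (ε-1) • NormedSpace.exp ((Real.log s - Real.log tt) • L)
          (F s (W s) - F s (V s)) := by
      have h10 := ee_factor L (fun s => F s (W s) - F s (V s)) b tt tt hiD
      rw [h10, ← hkey, ← map_sub, ee_add, neg_add_cancel, ee_zero L]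
      simp
    rw [hWV]
    -- final estimate via the master lemma
    have hcW : ContinuousOn (fun s => F s (W s)) (Set.Ioc b tt) := by
      apply hFcont.comp (continuousOn_id.prodMk (hWc.mono (fun s hs =>
        ⟨hb0.trans hs.1.le, lt_of_le_of_lt hs.2 httτ⟩)))
      intro s hs
      exact ⟨⟨hb0.trans hs.1.le, lt_of_lt_of_le (lt_of_le_of_lt hs.2 httτ) hτT.le⟩, trivial⟩
    have hcV : ContinuousOn (fun s => F s (V s)) (Set.Ioc b tt) := by
      apply hFcont.comp (continuousOn_id.prodMk ((hVc.mono Set.Ico_subset_Icc_self).mono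
        (fun s hs => ⟨hb0.trans hs.1.le, lt_of_le_of_lt hs.2 httτ⟩)))
      intro s hs
      exact ⟨⟨hb0.trans hs.1.le, lt_of_lt_of_le (lt_of_le_of_lt hs.2 httτ) hτT.le⟩, trivial⟩
    have hbnd : ∀ s ∈ Set.Ioc b tt, ‖F s (W s) - F s (V s)‖
        ≤ (Kx:ℝ) * ‖W sm - V sm‖ := by
      intro s hs
      have hsA : s ∈ Set.Icc b (b+δ) := ⟨hs.1.le, hs.2.trans htt.2⟩
      obtain ⟨hbW, hbV⟩ := hball s hsA
      have h11 := (hKx s ⟨hb0.trans hs.1.le,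
        lt_of_lt_of_le (lt_of_le_of_lt hs.2 httτ) hτT.le⟩).dist_le_mul _ hbW _ hbV
      rw [dist_eq_norm, dist_eq_norm] at h11
      refine h11.trans ?_
      apply mul_le_mul_of_nonneg_left _ Kx.coe_nonneg
      exact hsmax hsA
    have hKs0 : (0:ℝ) ≤ (Kx:ℝ) * ‖W sm - V sm‖ := by positivity
    have hm := (master L hM' hε (fun s => F s (W s) - F s (V s)) (tt := tt)
      hb0 htt.1 le_rfl hKs0 (hcW.sub hcV) hbnd).2
    refine hm.trans ?_
    have h12 : M' * ((Kx:ℝ) * ‖W sm - V sm‖) * ((tt ^ ε - b ^ ε) / ε)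
        = (M' * (Kx:ℝ) * ((tt ^ ε - b ^ ε) / ε)) * ‖W sm - V sm‖ := by ring
    rw [h12, hq]
    apply mul_le_mul_of_nonneg_right _ hφ0
    have h13 : tt ^ ε ≤ (b + δ) ^ ε :=
      Real.rpow_le_rpow (hb0.trans htt.1) htt.2 hε.le
    have h14 : b ^ ε ≤ tt ^ ε := Real.rpow_le_rpow hb0 htt.1 hε.le
    gcongr
  -- conclude W = V on [b, b+δ], contradicting the supremum
  have hzero : ‖W sm - V sm‖ = 0 := by
    have h15 := hest sm hsmA
    nlinarith
  have hWVA : ∀ s ∈ Set.Icc b (b+δ), W s = V s := by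
    intro s hs
    have h16 := hest s hs
    rw [hzero, mul_zero] at h16
    have h17 : ‖W s - V s‖ = 0 := le_antisymm h16 (norm_nonneg _)
    rwa [norm_eq_zero, sub_eq_zero] at h17
  have hSb : b + δ ∈ SS := by
    refine ⟨⟨by linarith, hδt⟩, fun u hu => ?_⟩
    rcases le_or_gt u b with h | h
    · exact hbS.2 u ⟨hu.1, h⟩
    · exact hWVA u ⟨h.le, hu.2⟩
  have := le_csSup hbdd hSb
  rw [← hb] at this
  linarith
end Main

/-- Fuchsian ODE existence and uniqueness from the singular time t = 0
(Lemma `lem:fuchsian`). Here σ^A = exp((log σ)·A) is interpreted through the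
operator exponential of the associated Euclidean continuous linear map, so that
‖σ^A‖ is the operator norm. -/
theorem fuchsian_ode_existence_uniqueness (N : ℕ) (hN : 1 ≤ N) (ε : ℝ) (hε : 0 < ε)
    (T : ℝ) (hT : 0 < T) (A : Matrix (Fin N) (Fin N) ℝ)
    (hA : ∃ M : ℝ, ∀ σ ∈ Set.Ioo (0:ℝ) 1,
      ‖NormedSpace.exp (Real.log σ • (Matrix.toEuclideanCLM (𝕜 := ℝ) A))‖ ≤ M)
    (F : ℝ → EuclideanSpace ℝ (Fin N) → EuclideanSpace ℝ (Fin N))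
    (hFcont : ContinuousOn (fun q : ℝ × EuclideanSpace ℝ (Fin N) => F q.1 q.2)
      (Set.Ico 0 T ×ˢ Set.univ))
    (hFlip : ∀ x : EuclideanSpace ℝ (Fin N), ∃ (K : NNReal) (r : ℝ), 0 < r ∧
      ∀ t ∈ Set.Ico (0:ℝ) T, LipschitzOnWith K (F t) (Metric.ball x r))
    (v : EuclideanSpace ℝ (Fin N)) (hv : Matrix.toEuclideanCLM (𝕜 := ℝ) A v = 0) :
    ∃ Tstar : ℝ, 0 < Tstar ∧ Tstar ≤ T ∧
      ∃ V : ℝ → EuclideanSpace ℝ (Fin N),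
        ContinuousOn V (Set.Ico 0 Tstar) ∧
        V 0 = v ∧
        (∀ t ∈ Set.Ioo (0:ℝ) Tstar, ∃ V' : EuclideanSpace ℝ (Fin N),
          HasDerivAt V V' t ∧
          t • V' + Matrix.toEuclideanCLM (𝕜 := ℝ) A (V t) = t ^ ε • F t (V t)) ∧
        (∀ W : ℝ → EuclideanSpace ℝ (Fin N),
          ContinuousOn W (Set.Ico 0 Tstar) →
          W 0 = v →
          (∀ t ∈ Set.Ioo (0:ℝ) Tstar, ∃ W' : EuclideanSpace ℝ (Fin N),
            HasDerivAt W W' t ∧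
            t • W' + Matrix.toEuclideanCLM (𝕜 := ℝ) A (W t) = t ^ ε • F t (W t)) →
          ∀ t ∈ Set.Ico (0:ℝ) Tstar, W t = V t) ∧
        ∃ C : ℝ, 0 ≤ C ∧ ∀ t ∈ Set.Ico (0:ℝ) Tstar, ‖V t - v‖ ≤ C * t ^ ε := by
  obtain ⟨M, hM⟩ := hA
  exact fuchsian_aux ε hε T hT (Matrix.toEuclideanCLM (𝕜 := ℝ) A) M hM F hFcont hFlip v hv
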